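/- Let T be a bounded totally paranormal operator and μ an isolated point of σ(T). Then the kernel of the Riesz projection E_μ equals the range of T − μI; in particular ran(T − μI) is closed. -/

import Mathlib

open Metric

section Aux

variable {E F : Type*} [NormedAddCommGroup E] [NormedSpace ℂ E] [CompleteSpace E]
  [NormedAddCommGroup F] [NormedSpace ℂ F] [CompleteSpace F]

theorem circleIntegral_comp_CLM (L : E →L[ℂ] F) {f : ℂ → E} {c : ℂ} {R : ℝ}
    (hf : CircleIntegrable f c R) :
    L (∮ z in C(c, R), f z) = ∮ z in C(c, R), L (f z) := by
  rw [circleIntegral, circleIntegral, ← L.intervalIntegral_comp_comm hf.out]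
  congr 1
  ext θ
  rw [L.map_smul]

theorem paranormal_chain {H : Type*} [NormedAddCommGroup H] [NormedSpace ℂ H]
    (A : H →L[ℂ] H) (h2 : ∀ y, ‖A y‖ ^ 2 ≤ ‖A (A y)‖ * ‖y‖) (x : H) :
    ∀ n : ℕ, ‖A x‖ ^ (n + 1) ≤ ‖(A ^ (n + 1)) x‖ * ‖x‖ ^ n := by
  have hpow : ∀ (n : ℕ) (y : H), (A ^ (n + 1)) y = A ((A ^ n) y) := by
    intro n y
    rw [pow_succ']
    rfl
  have step : ∀ n : ℕ, ‖A x‖ * ‖(A ^ (n + 1)) x‖ ≤ ‖(A ^ (n + 2)) x‖ * ‖x‖ := by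
    intro n
    induction n with
    | zero =>
      have := h2 x
      simpa [hpow, pow_two] using this
    | succ n ih =>
      rcases eq_or_lt_of_le (norm_nonneg ((A ^ (n + 2)) x)) with hz | hz
      · rw [← hz]
        simp [mul_nonneg, norm_nonneg]
      · have hy := h2 ((A ^ (n + 1)) x)
        rw [← hpow, ← hpow] at hy
        have key : ‖A x‖ * ‖(A ^ (n + 2)) x‖ * ‖(A ^ (n + 2)) x‖ ≤
            ‖(A ^ (n + 3)) x‖ * ‖x‖ * ‖(A ^ (n + 2)) x‖ := by
          calc ‖A x‖ * ‖(A ^ (n + 2)) x‖ * ‖(A ^ (n + 2)) x‖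
              = ‖A x‖ * ‖(A ^ (n + 2)) x‖ ^ 2 := by ring
            _ ≤ ‖A x‖ * (‖(A ^ (n + 3)) x‖ * ‖(A ^ (n + 1)) x‖) :=
                mul_le_mul_of_nonneg_left hy (norm_nonneg _)
            _ = ‖A x‖ * ‖(A ^ (n + 1)) x‖ * ‖(A ^ (n + 3)) x‖ := by ring
            _ ≤ ‖(A ^ (n + 2)) x‖ * ‖x‖ * ‖(A ^ (n + 3)) x‖ :=
                mul_le_mul_of_nonneg_right ih (norm_nonneg _)
            _ = ‖(A ^ (n + 3)) x‖ * ‖x‖ * ‖(A ^ (n + 2)) x‖ := by ring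
        exact le_of_mul_le_mul_right key hz
  intro n
  induction n with
  | zero => simp
  | succ n ih =>
    calc ‖A x‖ ^ (n + 2) = ‖A x‖ * ‖A x‖ ^ (n + 1) := by ring
      _ ≤ ‖A x‖ * (‖(A ^ (n + 1)) x‖ * ‖x‖ ^ n) :=
          mul_le_mul_of_nonneg_left ih (norm_nonneg _)
      _ = ‖A x‖ * ‖(A ^ (n + 1)) x‖ * ‖x‖ ^ n := by ring
      _ ≤ ‖(A ^ (n + 2)) x‖ * ‖x‖ * ‖x‖ ^ n :=
          mul_le_mul_of_nonneg_right (step n) (pow_nonneg (norm_nonneg _) n)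
      _ = ‖(A ^ (n + 2)) x‖ * ‖x‖ ^ (n + 1) := by ring

theorem my_geom_le {b c K : ℝ} (hb : 0 ≤ b) (hc : 0 ≤ c)
    (h : ∀ n : ℕ, b ^ (n + 1) ≤ K * c ^ n) : b ≤ c := by
  by_contra hbc
  push_neg at hbc
  have hb0 : 0 < b := lt_of_le_of_lt hc hbc
  rcases eq_or_lt_of_le hc with h0 | h0
  · have h1 := h 1
    rw [← h0] at h1
    simp at h1
    nlinarith
  · set q := b / c with hq
    have hq1 : 1 < q := (one_lt_div h0).mpr hbc
    obtain ⟨m, hm⟩ := pow_unbounded_of_one_lt (K / c) hq1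
    have hqm : q ^ (m + 1) ≤ K / c := by
      rw [hq, div_pow, div_le_div_iff₀ (pow_pos h0 _) h0]
      calc b ^ (m + 1) * c ≤ K * c ^ m * c :=
            mul_le_mul_of_nonneg_right (h m) h0.le
        _ = K * c ^ (m + 1) := by ring
    have : q ^ m ≤ q ^ (m + 1) := pow_le_pow_right₀ hq1.le (Nat.le_succ m)
    linarith

end Aux

set_option maxHeartbeats 1000000 in
theorem stmt_11 {H : Type*} [NormedAddCommGroup H] [InnerProductSpace ℂ H]
    [CompleteSpace H] (T : H →L[ℂ] H)
    (hT : ∀ (lam : ℂ) (x : H),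
      ‖(T - lam • 1) x‖ ^ 2 ≤ ‖((T - lam • 1) ∘L (T - lam • 1)) x‖ * ‖x‖)
    (μ : ℂ) (hμ : μ ∈ spectrum ℂ T)
    (r : ℝ) (hr : 0 < r)
    (hsep : Metric.closedBall μ r ∩ spectrum ℂ T = {μ})
    (E : H →L[ℂ] H)
    (hE : E = ((2 * Real.pi * Complex.I)⁻¹ : ℂ) •
      (∮ z in C(μ, r), Ring.inverse (z • (1 : H →L[ℂ] H) - T))) :
    LinearMap.ker (E : H →ₗ[ℂ] H) = LinearMap.range ((T - μ • 1 : H →L[ℂ] H) : H →ₗ[ℂ] H) ∧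
      IsClosed ((LinearMap.range ((T - μ • 1 : H →L[ℂ] H) : H →ₗ[ℂ] H) : Submodule ℂ H) : Set H) := by
  classical
  set ci : ℂ := ((2 * Real.pi * Complex.I)⁻¹ : ℂ) with hci
  set A : H →L[ℂ] H := T - μ • 1 with hA
  -- resolvent set facts
  have hres : ∀ z : ℂ, z ∈ closedBall μ r → z ≠ μ → z ∈ resolventSet ℂ T := by
    intro z hz hne
    rw [spectrum.mem_resolventSet_iff]
    by_contra h
    have hzs : z ∈ spectrum ℂ T := spectrum.mem_iff.mpr h
    exact hne (by simpa using (hsep ▸ Set.mem_inter hz hzs : z ∈ ({μ} : Set ℂ)))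
  have hres_eq : ∀ z : ℂ, Ring.inverse (z • (1 : H →L[ℂ] H) - T) = resolvent T z := by
    intro z
    rw [resolvent, Algebra.algebraMap_eq_smul_one]
  -- algebra: A * resolvent T z = (z - μ) • resolvent T z - 1 for z in resolvent set
  have hAR : ∀ z ∈ resolventSet ℂ T,
      A * resolvent T z = (z - μ) • resolvent T z - 1 := by
    intro z hz
    have hu : (algebraMap ℂ (H →L[ℂ] H) z - T) * resolvent T z = 1 := by
      rw [resolvent]
      exact Ring.mul_inverse_cancel _ hz
    have hrw : A = (z - μ) • (1 : H →L[ℂ] H) - (algebraMap ℂ (H →L[ℂ] H) z - T) := by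
      rw [Algebra.algebraMap_eq_smul_one, sub_smul, hA]
      abel
    rw [hrw, sub_mul, smul_mul_assoc, one_mul, hu]
  -- commutation
  have hcomm : ∀ z : ℂ, resolvent T z * A = A * resolvent T z := by
    intro z
    have h1 : Commute A (algebraMap ℂ (H →L[ℂ] H) z - T) := by
      refine Commute.sub_right (Algebra.commute_algebraMap_right z A) ?_
      rw [hA]
      exact Commute.sub_left (Commute.refl T) ((Commute.one_left T).smul_left μ)
    by_cases hz : IsUnit (algebraMap ℂ (H →L[ℂ] H) z - T)
    · obtain ⟨u, hu⟩ := hz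
      rw [resolvent, ← hu, Ring.inverse_unit]
      exact ((hu ▸ h1 : Commute A (u : H →L[ℂ] H)).units_inv_right).symm.eq
    · rw [resolvent, Ring.inverse_non_unit _ hz, zero_mul, mul_zero]
  -- differentiability of the resolvent on the punctured disk
  have hdiff : ∀ z : ℂ, z ∈ closedBall μ r → z ≠ μ → DifferentiableAt ℂ (resolvent T) z :=
    fun z hz hne => (spectrum.hasDerivAt_resolvent (hres z hz hne)).differentiableAt
  have hsphere_sub : ∀ ε : ℝ, 0 < ε → ε ≤ r → ∀ z ∈ sphere μ ε,
      z ∈ closedBall μ r ∧ z ≠ μ := by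
    intro ε hε hεr z hz
    rw [mem_sphere_iff_norm] at hz
    constructor
    · rw [mem_closedBall, dist_eq_norm]
      rw [hz]; exact hεr
    · intro h
      rw [h, sub_self, norm_zero] at hz
      exact hε.ne hz
  -- circle integrability
  have hcint : ∀ ε : ℝ, 0 < ε → ε ≤ r → ∀ n : ℕ,
      CircleIntegrable (fun z => (z - μ) ^ n • resolvent T z) μ ε := by
    intro ε hε hεr n
    refine ContinuousOn.circleIntegrable hε.le ?_
    refine ContinuousOn.smul (f := fun z : ℂ => (z - μ) ^ n) ?_ ?_
    · exact ((continuous_id.sub continuous_const).pow n).continuousOn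
    · intro z hz
      obtain ⟨h1, h2⟩ := hsphere_sub ε hε hεr z hz
      exact (hdiff z h1 h2).continuousAt.continuousWithinAt
  have hrint : CircleIntegrable (resolvent T) μ r := by
    refine ContinuousOn.circleIntegrable hr.le ?_
    intro z hz
    obtain ⟨h1, h2⟩ := hsphere_sub r hr le_rfl z hz
    exact (hdiff z h1 h2).continuousAt.continuousWithinAt
  -- the family of integrals
  set N : ℝ → ℕ → (H →L[ℂ] H) :=
    fun ε n => ∮ z in C(μ, ε), (z - μ) ^ n • resolvent T z with hN
  -- contour deformation
  have hdeform : ∀ ε : ℝ, 0 < ε → ε ≤ r → ∀ n : ℕ, N r n = N ε n := by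
    intro ε hε hεr n
    refine Complex.circleIntegral_eq_of_differentiable_on_annulus_off_countable hε hεr
      Set.countable_empty ?_ ?_
    · intro z hz
      have h1 : z ∈ closedBall μ r := hz.1
      have h2 : z ≠ μ := by
        intro h
        exact hz.2 (by simp [h, hε])
      exact (((differentiableAt_id.sub_const μ).pow n).smul
        (hdiff z h1 h2)).continuousAt.continuousWithinAt
    · intro z hz
      have h1 : z ∈ closedBall μ r := ball_subset_closedBall hz.1.1
      have h2 : z ≠ μ := by
        intro h
        exact hz.1.2 (by simp [h, hε.le])
      exact ((differentiableAt_id.sub_const μ).pow n).smul (hdiff z h1 h2)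
  -- rewrite E
  have hE' : E = ci • N r 0 := by
    rw [hE, hN]
    congr 1
    simp only [hres_eq, pow_zero, one_smul]
  -- the key multiplication identity
  have hmulN : ∀ ε : ℝ, 0 < ε → ε ≤ r → ∀ n : ℕ, A * N ε n = N ε (n + 1) := by
    intro ε hε hεr n
    have h1 : A * N ε n =
        ∮ z in C(μ, ε), A * ((z - μ) ^ n • resolvent T z) := by
      have := circleIntegral_comp_CLM (ContinuousLinearMap.mul ℂ (H →L[ℂ] H) A)
        (hcint ε hε hεr n)
      simpa [ContinuousLinearMap.mul_apply'] using this
    have h2 : (∮ z in C(μ, ε), A * ((z - μ) ^ n • resolvent T z)) =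
        ∮ z in C(μ, ε), ((z - μ) ^ (n + 1) • resolvent T z - (z - μ) ^ n • (1 : H →L[ℂ] H)) := by
      refine circleIntegral.integral_congr hε.le ?_
      intro z hz
      obtain ⟨hz1, hz2⟩ := hsphere_sub ε hε hεr z hz
      have := hAR z (hres z hz1 hz2)
      show A * ((z - μ) ^ n • resolvent T z)
        = (z - μ) ^ (n + 1) • resolvent T z - (z - μ) ^ n • (1 : H →L[ℂ] H)
      rw [mul_smul_comm, this, smul_sub, smul_smul, ← pow_succ]
    have h3 : (∮ z in C(μ, ε), ((z - μ) ^ (n + 1) • resolvent T z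
          - (z - μ) ^ n • (1 : H →L[ℂ] H))) =
        N ε (n + 1) - ∮ z in C(μ, ε), (z - μ) ^ n • (1 : H →L[ℂ] H) := by
      refine circleIntegral.integral_sub (hcint ε hε hεr (n + 1)) ?_
      exact ContinuousOn.circleIntegrable hε.le
        (((continuous_id.sub continuous_const).pow n).continuousOn.smul continuousOn_const)
    have h4 : (∮ z in C(μ, ε), (z - μ) ^ n • (1 : H →L[ℂ] H)) = 0 := by
      rw [circleIntegral.integral_smul_const]
      have : (∮ z in C(μ, ε), (z - μ) ^ n) = 0 := by
        refine Complex.circleIntegral_eq_zero_of_differentiable_on_off_countable hε.le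
          Set.countable_empty (((continuous_id.sub continuous_const).pow n).continuousOn) ?_
        intro z _
        exact (differentiableAt_id.sub_const μ).pow n
      rw [this, zero_smul]
    rw [h1, h2, h3, h4, sub_zero]
  -- powers of A against E
  have hpowE : ∀ n : ℕ, A ^ n * E = ci • N r n := by
    intro n
    induction n with
    | zero => rw [pow_zero, one_mul, hE']
    | succ n ih =>
      rw [pow_succ', mul_assoc, ih, mul_smul_comm, hmulN r hr le_rfl n]
  -- paranormality at μ
  have hpara : ∀ y : H, ‖A y‖ ^ 2 ≤ ‖A (A y)‖ * ‖y‖ := by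
    intro y
    have := hT μ y
    rw [hA]
    simpa using this
  have hnormci : ‖ci‖ = (2 * Real.pi)⁻¹ := by
    rw [hci]
    simp [Real.pi_pos.le]
  -- norm bound for A ^ n * E
  have hbound : ∀ ε : ℝ, 0 < ε → ε ≤ r → ∃ M : ℝ, 0 ≤ M ∧
      ∀ n : ℕ, ‖A ^ n * E‖ ≤ ε ^ (n + 1) * M := by
    intro ε hε hεr
    obtain ⟨C, hC⟩ := (isCompact_sphere μ ε).exists_bound_of_continuousOn
      (fun z hz => (hdiff z (hsphere_sub ε hε hεr z hz).1
        (hsphere_sub ε hε hεr z hz).2).continuousAt.continuousWithinAt)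
    refine ⟨max C 0, le_max_right _ _, fun n => ?_⟩
    have hNb : ‖N ε n‖ ≤ 2 * Real.pi * ε * (ε ^ n * max C 0) := by
      rw [hN]
      refine circleIntegral.norm_integral_le_of_norm_le_const hε.le ?_
      intro z hz
      have hzn : ‖z - μ‖ = ε := mem_sphere_iff_norm.mp hz
      rw [norm_smul, norm_pow, hzn]
      exact mul_le_mul_of_nonneg_left (le_trans (hC z hz) (le_max_left _ _))
        (pow_nonneg hε.le n)
    rw [hpowE n, hdeform ε hε hεr n, norm_smul, hnormci]
    calc (2 * Real.pi)⁻¹ * ‖N ε n‖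
        ≤ (2 * Real.pi)⁻¹ * (2 * Real.pi * ε * (ε ^ n * max C 0)) :=
          mul_le_mul_of_nonneg_left hNb (by positivity)
      _ = ε ^ (n + 1) * max C 0 := by
          have hπ : (Real.pi : ℝ) ≠ 0 := Real.pi_ne_zero
          field_simp
          ring
  -- A * E = 0 via paranormality
  have hAE : A * E = 0 := by
    ext x
    rw [ContinuousLinearMap.mul_apply, ContinuousLinearMap.zero_apply]
    have hle : ∀ ε : ℝ, 0 < ε → ε ≤ r → ‖A (E x)‖ ≤ ε * ‖E x‖ := by
      intro ε hε hεr
      obtain ⟨M, hM0, hM⟩ := hbound ε hε hεr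
      refine my_geom_le (K := ε ^ 2 * (M * ‖x‖)) (norm_nonneg _)
        (mul_nonneg hε.le (norm_nonneg _)) ?_
      intro n
      calc ‖A (E x)‖ ^ (n + 1) ≤ ‖(A ^ (n + 1)) (E x)‖ * ‖E x‖ ^ n :=
            paranormal_chain A hpara (E x) n
        _ = ‖(A ^ (n + 1) * E) x‖ * ‖E x‖ ^ n := by
            rw [ContinuousLinearMap.mul_apply]
        _ ≤ ‖A ^ (n + 1) * E‖ * ‖x‖ * ‖E x‖ ^ n :=
            mul_le_mul_of_nonneg_right ((A ^ (n + 1) * E).le_opNorm x)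
              (pow_nonneg (norm_nonneg _) n)
        _ ≤ ε ^ (n + 2) * M * ‖x‖ * ‖E x‖ ^ n :=
            mul_le_mul_of_nonneg_right (mul_le_mul_of_nonneg_right (hM (n + 1))
              (norm_nonneg _)) (pow_nonneg (norm_nonneg _) n)
        _ = ε ^ 2 * (M * ‖x‖) * (ε * ‖E x‖) ^ n := by
            rw [mul_pow]
            ring
    have hfin : ‖A (E x)‖ ≤ 0 := by
      by_contra hpos
      push_neg at hpos
      rcases eq_or_lt_of_le (norm_nonneg (E x)) with hEx | hEx
      · have := hle r hr le_rfl
        rw [← hEx, mul_zero] at this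
        exact absurd this (not_le.mpr hpos)
      · have hεpos : 0 < min r (‖A (E x)‖ / (2 * ‖E x‖)) :=
          lt_min hr (div_pos hpos (by linarith))
        have h1 := hle _ hεpos (min_le_left _ _)
        have h2 : min r (‖A (E x)‖ / (2 * ‖E x‖)) * ‖E x‖
            ≤ (‖A (E x)‖ / (2 * ‖E x‖)) * ‖E x‖ :=
          mul_le_mul_of_nonneg_right (min_le_right _ _) (norm_nonneg _)
        have h3 : (‖A (E x)‖ / (2 * ‖E x‖)) * ‖E x‖ = ‖A (E x)‖ / 2 := by
          field_simp
        rw [h3] at h2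
        linarith
    exact norm_le_zero_iff.mp hfin
  -- E * A = 0
  have hEA : E * A = 0 := by
    have hflip : N r 0 * A = A * N r 0 := by
      show (∮ z in C(μ, r), (z - μ) ^ 0 • resolvent T z) * A
        = A * ∮ z in C(μ, r), (z - μ) ^ 0 • resolvent T z
      have h1 := circleIntegral_comp_CLM ((ContinuousLinearMap.mul ℂ (H →L[ℂ] H)).flip A)
        (hcint r hr le_rfl 0)
      have h2 := circleIntegral_comp_CLM (ContinuousLinearMap.mul ℂ (H →L[ℂ] H) A)
        (hcint r hr le_rfl 0)
      simp only [ContinuousLinearMap.flip_apply, ContinuousLinearMap.mul_apply'] at h1 h2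
      rw [h1, h2]
      congr 1
      funext z
      rw [smul_mul_assoc, mul_smul_comm, hcomm z]
    have hcommE : E * A = A * E := by
      rw [hE', smul_mul_assoc, mul_smul_comm, hflip]
    rw [hcommE, hAE]
  -- the quasi-inverse S
  have hSint : CircleIntegrable (fun z => (z - μ)⁻¹ • resolvent T z) μ r := by
    refine ContinuousOn.circleIntegrable hr.le ?_
    intro z hz
    obtain ⟨h1, h2⟩ := hsphere_sub r hr le_rfl z hz
    exact (((differentiableAt_id.sub_const μ).inv (sub_ne_zero.mpr h2)).smul
      (hdiff z h1 h2)).continuousAt.continuousWithinAt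
  have hconst_int : CircleIntegrable (fun z => (z - μ)⁻¹ • (1 : H →L[ℂ] H)) μ r := by
    refine ContinuousOn.circleIntegrable hr.le ?_
    refine ContinuousOn.smul (ContinuousOn.inv₀ (continuousOn_id.sub continuousOn_const) ?_)
      continuousOn_const
    intro z hz
    exact sub_ne_zero.mpr (hsphere_sub r hr le_rfl z hz).2
  have hASE : A * (ci • ∮ z in C(μ, r), (z - μ)⁻¹ • resolvent T z) = E - 1 := by
    have h1 : A * (∮ z in C(μ, r), (z - μ)⁻¹ • resolvent T z)
        = ∮ z in C(μ, r), A * ((z - μ)⁻¹ • resolvent T z) := by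
      have := circleIntegral_comp_CLM (ContinuousLinearMap.mul ℂ (H →L[ℂ] H) A) hSint
      simpa [ContinuousLinearMap.mul_apply'] using this
    have h2 : (∮ z in C(μ, r), A * ((z - μ)⁻¹ • resolvent T z))
        = ∮ z in C(μ, r), (resolvent T z - (z - μ)⁻¹ • (1 : H →L[ℂ] H)) := by
      refine circleIntegral.integral_congr hr.le ?_
      intro z hz
      obtain ⟨hz1, hz2⟩ := hsphere_sub r hr le_rfl z hz
      show A * ((z - μ)⁻¹ • resolvent T z) = resolvent T z - (z - μ)⁻¹ • (1 : H →L[ℂ] H)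
      rw [mul_smul_comm, hAR z (hres z hz1 hz2), smul_sub, smul_smul,
        inv_mul_cancel₀ (sub_ne_zero.mpr hz2), one_smul]
    have h3 : (∮ z in C(μ, r), (resolvent T z - (z - μ)⁻¹ • (1 : H →L[ℂ] H)))
        = (∮ z in C(μ, r), resolvent T z) - ∮ z in C(μ, r), (z - μ)⁻¹ • (1 : H →L[ℂ] H) :=
      circleIntegral.integral_sub hrint hconst_int
    have h4 : (∮ z in C(μ, r), (z - μ)⁻¹ • (1 : H →L[ℂ] H))
        = (2 * Real.pi * Complex.I : ℂ) • (1 : H →L[ℂ] H) := by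
      rw [circleIntegral.integral_smul_const,
        circleIntegral.integral_sub_inv_of_mem_ball (mem_ball_self hr)]
    have h5 : (∮ z in C(μ, r), resolvent T z) = N r 0 := by
      rw [hN]
      congr 1
      funext z
      rw [pow_zero, one_smul]
    have hne : (2 * (Real.pi : ℂ) * Complex.I) ≠ 0 := by
      simp [Real.pi_ne_zero, Complex.I_ne_zero]
    rw [mul_smul_comm]
    rw [h1]
    rw [h2]
    rw [h3]
    rw [h4]
    rw [h5]
    rw [smul_sub]
    rw [← hE']
    rw [smul_smul]
    rw [hci]
    rw [inv_mul_cancel₀ hne, one_smul]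
  -- conclusion
  have hker : (LinearMap.ker (E : H →ₗ[ℂ] H) : Submodule ℂ H) = LinearMap.range (A : H →ₗ[ℂ] H) := by
    apply le_antisymm
    · intro x hx
      rw [LinearMap.mem_ker] at hx
      refine ⟨-((ci • ∮ z in C(μ, r), (z - μ)⁻¹ • resolvent T z) x), ?_⟩
      have hx' := congrArg (fun B : H →L[ℂ] H => B x) hASE
      simp only [ContinuousLinearMap.mul_apply, ContinuousLinearMap.sub_apply,
        ContinuousLinearMap.one_apply] at hx'
      rw [show E x = 0 from hx] at hx'
      show A (-((ci • ∮ z in C(μ, r), (z - μ)⁻¹ • resolvent T z) x)) = x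
      rw [map_neg, hx']
      simp
    · rintro x ⟨y, rfl⟩
      rw [LinearMap.mem_ker]
      show E (A y) = 0
      have hy := congrArg (fun B : H →L[ℂ] H => B y) hEA
      simpa [ContinuousLinearMap.mul_apply] using hy
  refine ⟨hker, ?_⟩
  rw [← hker]
  exact ContinuousLinearMap.isClosed_ker E
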